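/- Consider the planar system T' = T(1-T)[T·sinθ + (1-T)(1-cosθ)²], θ' = -T(3+cosθ) - (1-T)(1-cosθ)sinθ, describing the vacuum cosmology of f(R) = R + αR² gravity. Then: (i) for 0 < T < 1, the derivative of the function 𝔉(T,θ) = (1-T)(3+cosθ)/T along the flow equals -2(1-T)²(1-cosθ)²/T, which is ≤ 0; hence 𝔉 is monotonically non-increasing, and strictly decreasing except where cosθ = 1; (ii) the system has no equilibrium points with 0 < T ≤ 1 (at any equilibrium with 0 < T < 1 the identity would force cosθ = 1, whence θ' = -4T ≠ 0, and at T = 1 one has θ' = -(3+cosθ) < 0); (iii) the equilibria on T = 0 are exactly the points with θ ∈ πℤ, namely θ = 2nπ (the asymptotically de Sitter point O) and θ = (2n+1)π (the point A with deceleration parameter q = 1). -/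

import Mathlib

/-- `T`-component of the global `f(R) = R + αR²` vacuum cosmology vector field. -/
noncomputable def T18 (T θ : ℝ) : ℝ :=
  T * (1 - T) * (T * Real.sin θ + (1 - T) * (1 - Real.cos θ) ^ 2)

/-- `θ`-component of the global `f(R) = R + αR²` vacuum cosmology vector field. -/
noncomputable def Th18 (T θ : ℝ) : ℝ :=
  -T * (3 + Real.cos θ) - (1 - T) * (1 - Real.cos θ) * Real.sin θ

/-- Global dynamics of `f(R) = R + αR²` vacuum cosmology: (i) along the flow, for
`0 < T < 1`, the monotone function `𝔉 = (1-T)(3+cos θ)/T` has derivative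
`-2(1-T)²(1-cos θ)²/T ≤ 0`, strictly negative unless `cos θ = 1`; (ii) there are no
equilibria with `0 < T ≤ 1`; (iii) the equilibria on `T = 0` are exactly `θ ∈ πℤ`. -/
theorem starobinsky_global_dynamics :
    (∀ (Tf θf : ℝ → ℝ) (t : ℝ),
      HasDerivAt Tf (T18 (Tf t) (θf t)) t →
      HasDerivAt θf (Th18 (Tf t) (θf t)) t →
      0 < Tf t → Tf t < 1 →
      HasDerivAt (fun s => (1 - Tf s) * (3 + Real.cos (θf s)) / Tf s)
          (-2 * (1 - Tf t) ^ 2 * (1 - Real.cos (θf t)) ^ 2 / Tf t) t ∧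
        -2 * (1 - Tf t) ^ 2 * (1 - Real.cos (θf t)) ^ 2 / Tf t ≤ 0 ∧
        (Real.cos (θf t) ≠ 1 →
          -2 * (1 - Tf t) ^ 2 * (1 - Real.cos (θf t)) ^ 2 / Tf t < 0)) ∧
    (∀ T θ : ℝ, 0 < T → T ≤ 1 → ¬(T18 T θ = 0 ∧ Th18 T θ = 0)) ∧
    (∀ θ : ℝ, (T18 0 θ = 0 ∧ Th18 0 θ = 0) ↔ ∃ n : ℤ, θ = (n : ℝ) * Real.pi) := by
  refine ⟨?_, ?_, ?_⟩
  · intro Tf θf t hT hθ hT0 hT1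
    set T := Tf t with hTdef
    set θ := θf t with hθdef
    have hTne : T ≠ 0 := ne_of_gt hT0
    have hcos : HasDerivAt (fun s => Real.cos (θf s))
        (-Real.sin θ * Th18 T θ) t := (Real.hasDerivAt_cos θ).comp t hθ
    have hnum : HasDerivAt (fun s => (1 - Tf s) * (3 + Real.cos (θf s)))
        ((0 - T18 T θ) * (3 + Real.cos θ) + (1 - T) * (0 + -Real.sin θ * Th18 T θ)) t :=
      ((hasDerivAt_const t (1:ℝ)).sub hT).mul ((hasDerivAt_const t (3:ℝ)).add hcos)
    have hdiv := hnum.div hT hTne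
    have hsc : Real.sin θ ^ 2 + Real.cos θ ^ 2 = 1 := Real.sin_sq_add_cos_sq θ
    have heq : (((0 - T18 T θ) * (3 + Real.cos θ) + (1 - T) * (0 + -Real.sin θ * Th18 T θ)) * T
        - (1 - T) * (3 + Real.cos θ) * T18 T θ) / T ^ 2
        = -2 * (1 - T) ^ 2 * (1 - Real.cos θ) ^ 2 / T := by
      rw [T18, Th18, div_eq_div_iff (by positivity) hTne]
      linear_combination (T^2*(1-T)^2*(1-Real.cos θ)) * hsc
    constructor
    · convert hdiv using 1
      · rfl
      · rfl
      · rfl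
      · rw [← heq]
    · have hfac : -2 * (1 - T) ^ 2 * (1 - Real.cos θ) ^ 2 ≤ 0 := by
        nlinarith [sq_nonneg ((1 - T) * (1 - Real.cos θ))]
      constructor
      · exact div_nonpos_of_nonpos_of_nonneg hfac hT0.le
      · intro hc
        have h1 : Real.cos θ < 1 := lt_of_le_of_ne (Real.cos_le_one θ) hc
        have : (0:ℝ) < 2 * (1 - T) ^ 2 * (1 - Real.cos θ) ^ 2 := by
          have := sub_pos.mpr hT1
          have := sub_pos.mpr h1
          positivity
        have : -2 * (1 - T) ^ 2 * (1 - Real.cos θ) ^ 2 < 0 := by linarith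
        exact div_neg_of_neg_of_pos this hT0
  · intro T θ hT0 hT1 ⟨h1, h2⟩
    rcases eq_or_lt_of_le hT1 with h | h
    · subst h
      rw [Th18] at h2
      nlinarith [Real.neg_one_le_cos θ]
    · have hT1' : (0:ℝ) < 1 - T := by linarith
      rw [T18] at h1
      rw [Th18] at h2
      have h1' : T * Real.sin θ + (1 - T) * (1 - Real.cos θ) ^ 2 = 0 := by
        have := mul_ne_zero (ne_of_gt hT0) (ne_of_gt hT1')
        rcases mul_eq_zero.mp h1 with h | h
        · exact absurd h this
        · exact h
      have hsc : Real.sin θ ^ 2 + Real.cos θ ^ 2 = 1 := Real.sin_sq_add_cos_sq θ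
      -- derive cos θ = 1
      have key : 2 * (1 - T) * (1 - Real.cos θ) ^ 2 = 0 := by
        linear_combination Real.sin θ * h2 + (3 + Real.cos θ) * h1' +
          (1 - T) * (1 - Real.cos θ) * hsc
      have hc : Real.cos θ = 1 := by
        have h4 : (1 - Real.cos θ) ^ 2 = 0 := by
          rcases mul_eq_zero.mp key with h | h
          · rcases mul_eq_zero.mp h with h' | h'
            · norm_num at h'
            · linarith
          · exact h
        have := pow_eq_zero_iff (n := 2) (by norm_num) |>.mp h4
        linarith
      have hs : Real.sin θ = 0 := by nlinarith
      rw [hc, hs] at h2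
      nlinarith
  · intro θ
    constructor
    · rintro ⟨_, h2⟩
      rw [Th18] at h2
      simp only [neg_zero, zero_mul, sub_zero, one_mul] at h2
      have hs : Real.sin θ = 0 := by
        rcases mul_eq_zero.mp (by linarith : (1 - Real.cos θ) * Real.sin θ = 0) with h | h
        · have hc : Real.cos θ = 1 := by linarith
          nlinarith [Real.sin_sq_add_cos_sq θ]
        · exact h
      rcases Real.sin_eq_zero_iff.mp hs with ⟨n, hn⟩
      exact ⟨n, hn.symm⟩
    · rintro ⟨n, rfl⟩
      have hs : Real.sin ((n : ℝ) * Real.pi) = 0 := Real.sin_int_mul_pi n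
      constructor
      · rw [T18]; ring
      · rw [Th18, hs]; ring
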